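/- Let A = [[1,0],[c,-1]] and B = [[-t, y],[(1-t²)/y, t]] with y ∈ ℂ*. Then A and B have a common eigenvector in ℂ² if and only if yc = 2(t+1) or yc = 2(t-1) or t = 1 or t = -1 with the corresponding eigenvector matching; in particular, the representation λ₂ of FVB₂ sending σ₁ ↦ A, ρ₁ ↦ B is irreducible if and only if yc ≠ 2(t±1). -/

import Mathlib

/-- The matrices `A = [[1,0],[c,-1]]` and `B = [[-t,y],[(1-t²)/y,t]]` (with `y ≠ 0`)
have a common eigenvector iff `yc = 2(t+1)` or `yc = 2(t-1)`; i.e. the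
representation λ₂ of `FVB₂` is irreducible iff `yc ≠ 2(t±1)`. -/
theorem stmt3 (c y t : ℂ) (hy : y ≠ 0)
    (A B : Matrix (Fin 2) (Fin 2) ℂ)
    (hA : A = !![1, 0; c, -1])
    (hB : B = !![-t, y; (1 - t ^ 2) / y, t]) :
    (∃ v : Fin 2 → ℂ, v ≠ 0 ∧ (∃ μ : ℂ, A.mulVec v = μ • v) ∧
        (∃ ν : ℂ, B.mulVec v = ν • v)) ↔
      (y * c = 2 * (t + 1) ∨ y * c = 2 * (t - 1)) := by
  subst hA hB
  constructor
  · rintro ⟨v, hv, ⟨μ, hμ⟩, ⟨ν, hν⟩⟩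
    have hμ0 := congrFun hμ 0
    have hμ1 := congrFun hμ 1
    have hν0 := congrFun hν 0
    have hν1 := congrFun hν 1
    simp [Matrix.mulVec, dotProduct, Fin.sum_univ_two] at hμ0 hμ1 hν0 hν1
    -- v 0 ≠ 0
    have hx : v 0 ≠ 0 := by
      intro h0
      have h1 : y * v 1 = 0 := by rw [h0] at hν0; simpa using hν0
      have hz : v 1 = 0 := by
        rcases mul_eq_zero.1 h1 with h | h
        · exact absurd h hy
        · exact h
      apply hv
      funext i
      fin_cases i <;> simp [h0, hz]
    -- μ = 1
    have hμe : μ = 1 := by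
      have h := hμ0
      have : (μ - 1) * v 0 = 0 := by linear_combination -h
      rcases mul_eq_zero.1 this with h' | h'
      · linear_combination h'
      · exact absurd h' hx
    subst hμe
    -- v 1 = c * v 0 / 2
    have hz : v 1 = c * v 0 / 2 := by
      field_simp
      linear_combination -hμ1
    -- ν = (y*c - 2*t)/2
    have hνe : ν = (y * c - 2 * t) / 2 := by
      rw [hz] at hν0
      field_simp at hν0 ⊢
      have : (2 * ν - (y * c - 2 * t)) * v 0 = 0 := by linear_combination (-v 0) * hν0
      rcases mul_eq_zero.1 this with h' | h'
      · linear_combination h'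
      · exact absurd h' hx
    rw [hz, hνe] at hν1
    field_simp at hν1
    have key : (y * c - 2 * (t + 1)) * (y * c - 2 * (t - 1)) = 0 := by
      have : ((y * c - 2 * (t + 1)) * (y * c - 2 * (t - 1))) * v 0 = 0 := by
        linear_combination (-v 0) * hν1
      rcases mul_eq_zero.1 this with h' | h'
      · exact h'
      · exact absurd h' hx
    rcases mul_eq_zero.1 key with h | h
    · left; linear_combination h
    · right; linear_combination h
  · rintro (h | h)
    · refine ⟨![2, c], ?_, ⟨1, ?_⟩, ⟨1, ?_⟩⟩
      · intro h0
        have := congrFun h0 0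
        simp at this
      · funext i
        fin_cases i
        · simp [Matrix.mulVec, dotProduct, Fin.sum_univ_two]
        · simp [Matrix.mulVec, dotProduct, Fin.sum_univ_two]; ring
      · funext i
        fin_cases i
        · simp [Matrix.mulVec, dotProduct, Fin.sum_univ_two]
          linear_combination h
        · simp [Matrix.mulVec, dotProduct, Fin.sum_univ_two]
          field_simp
          linear_combination (t - 1) * h
    · refine ⟨![2, c], ?_, ⟨1, ?_⟩, ⟨-1, ?_⟩⟩
      · intro h0
        have := congrFun h0 0
        simp at this
      · funext i
        fin_cases i
        · simp [Matrix.mulVec, dotProduct, Fin.sum_univ_two]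
        · simp [Matrix.mulVec, dotProduct, Fin.sum_univ_two]; ring
      · funext i
        fin_cases i
        · simp [Matrix.mulVec, dotProduct, Fin.sum_univ_two]
          linear_combination h
        · simp [Matrix.mulVec, dotProduct, Fin.sum_univ_two]
          field_simp
          linear_combination (t + 1) * h
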